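/- Let L be a Lie algebra over a field and let h: L × L → L⊗L be a universal Lie pairing. Then the submodule L□L spanned by {l⊗l : l ∈ L} is contained in the center of L⊗L; in particular, L□L is a Lie ideal of L⊗L, so the exterior square L∧L := (L⊗L)/(L□L) is a Lie algebra. -/

import Mathlib

universe u v w x

/-- A Lie pairing `ρ : L × L → H` of Lie algebras over a field `F`:
a bilinear map satisfying the three Lie-pairing relations. -/
structure IsLiePairing (F : Type u) [Field F] {L : Type v} {H : Type w}
    [LieRing L] [LieAlgebra F L] [LieRing H] [LieAlgebra F H]
    (ρ : L → L → H) : Prop where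
  add_left : ∀ l l' k : L, ρ (l + l') k = ρ l k + ρ l' k
  add_right : ∀ l k k' : L, ρ l (k + k') = ρ l k + ρ l k'
  smul_left : ∀ (c : F) (l k : L), ρ (c • l) k = c • ρ l k
  smul_right : ∀ (c : F) (l k : L), ρ l (c • k) = c • ρ l k
  bracket_left : ∀ l l' s : L, ρ ⁅l, l'⁆ s = ρ l ⁅l', s⁆ - ρ l' ⁅l, s⁆
  bracket_right : ∀ l s s' : L, ρ l ⁅s, s'⁆ = ρ ⁅s', l⁆ s - ρ ⁅s, l⁆ s'
  bracket_bracket : ∀ l s l' s' : L, ρ ⁅l, s⁆ ⁅l', s'⁆ = -⁅ρ s l, ρ l' s'⁆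

/-- `h : L × L → T` is a universal Lie pairing: `T` plays the role of the
nonabelian tensor square `L ⊗ L`, with `h l l' = l ⊗ l'`. -/
structure IsUniversalLiePairing (F : Type u) [Field F] (L : Type v) (T : Type w)
    [LieRing L] [LieAlgebra F L] [LieRing T] [LieAlgebra F T]
    (h : L → L → T) : Prop where
  isLiePairing : IsLiePairing F h
  universal : ∀ (Q : Type (max u v w)) [LieRing Q] [LieAlgebra F Q]
      (h' : L → L → Q), IsLiePairing F h' →
        ∃! ζ : T →ₗ⁅F⁆ Q, ∀ x y : L, ζ (h x y) = h' x y

section ULiftLie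

variable {R : Type*} [CommRing R] {M : Type*} [LieRing M] [LieAlgebra R M]

instance uliftLieRing : LieRing (ULift.{x} M) where
  bracket a b := ⟨⁅a.down, b.down⁆⟩
  add_lie a b c := ULift.ext _ _ (add_lie a.down b.down c.down)
  lie_add a b c := ULift.ext _ _ (lie_add a.down b.down c.down)
  lie_self a := ULift.ext _ _ (lie_self a.down)
  leibniz_lie a b c := ULift.ext _ _ (leibniz_lie a.down b.down c.down)

@[simp] theorem ulift_down_bracket (a b : ULift.{x} M) :
    (⁅a, b⁆ : ULift.{x} M).down = ⁅a.down, b.down⁆ := rfl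

instance uliftLieAlgebra : LieAlgebra R (ULift.{x} M) where
  lie_smul t a b := ULift.ext _ _ (lie_smul t a.down b.down)

/-- `ULift.up` as a morphism of Lie algebras. -/
def uliftUpLieHom : M →ₗ⁅R⁆ ULift.{x} M where
  toFun a := ⟨a⟩
  map_add' _ _ := rfl
  map_smul' _ _ := rfl
  map_lie' := rfl

/-- `ULift.down` as a morphism of Lie algebras. -/
def uliftDownLieHom : ULift.{x} M →ₗ⁅R⁆ M where
  toFun a := a.down
  map_add' _ _ := rfl
  map_smul' _ _ := rfl
  map_lie' := rfl

end ULiftLie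

/-- Composing a Lie pairing with a Lie algebra morphism gives a Lie pairing. -/
theorem IsLiePairing.comp {F : Type u} [Field F] {L : Type v} {H : Type w} {Q : Type x}
    [LieRing L] [LieAlgebra F L] [LieRing H] [LieAlgebra F H]
    [LieRing Q] [LieAlgebra F Q]
    {ρ : L → L → H} (p : IsLiePairing F ρ) (f : H →ₗ⁅F⁆ Q) :
    IsLiePairing F (fun a b => f (ρ a b)) := by
  constructor
  · intro l l' k; rw [p.add_left, map_add f]
  · intro l k k'; rw [p.add_right, map_add f]
  · intro c l k; rw [p.smul_left, map_smul f]
  · intro c l k; rw [p.smul_right, map_smul f]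
  · intro l l' s; rw [p.bracket_left, map_sub f]
  · intro l s s'; rw [p.bracket_right, map_sub f]
  · intro l s l' s'; rw [p.bracket_bracket, map_neg f, f.map_lie]

/-- The square `L□L`, i.e. the submodule of `L⊗L` spanned by the elements
`l⊗l`, is contained in the center of `L⊗L`; in particular it is (the carrier
of) a Lie ideal of `L⊗L`, so that the exterior square `(L⊗L)/(L□L)` is a
Lie algebra. -/
theorem square_le_center (F : Type u) [Field F] (L : Type v) (T : Type w)
    [LieRing L] [LieAlgebra F L] [LieRing T] [LieAlgebra F T]
    (h : L → L → T) (hh : IsUniversalLiePairing F L T h) :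
    Submodule.span F {x : T | ∃ l : L, x = h l l} ≤
        (LieAlgebra.center F T : Submodule F T) ∧
      ∃ I : LieIdeal F T,
        (I : Submodule F T) = Submodule.span F {x : T | ∃ l : L, x = h l l} := by
  obtain ⟨p, univ⟩ := hh
  -- zero lemmas
  have hz_right : ∀ k : L, h k 0 = 0 := by
    intro k
    have := p.smul_right 0 k 0
    simpa using this
  -- the key relation : `h a b` commutes with `h l l`
  have key : ∀ a b l : L, ⁅h a b, h l l⁆ = 0 := by
    intro a b l
    have := p.bracket_bracket b a l l
    rw [lie_self, hz_right] at this
    have := this.symm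
    rwa [neg_eq_zero] at this
  -- the Lie subalgebra generated by the image of `h`
  set s : Set T := Set.range fun q : L × L => h q.1 q.2 with hs
  set S : LieSubalgebra F T := LieSubalgebra.lieSpan F T s with hS
  have hmem : ∀ a b : L, h a b ∈ S := fun a b =>
    LieSubalgebra.subset_lieSpan ⟨(a, b), rfl⟩
  -- the pairing with values in `S`
  have pS : IsLiePairing F (fun a b => (⟨h a b, hmem a b⟩ : S)) := by
    constructor
    · intro l l' k; exact Subtype.ext (p.add_left l l' k)
    · intro l k k'; exact Subtype.ext (p.add_right l k k')
    · intro c l k; exact Subtype.ext (p.smul_left c l k)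
    · intro c l k; exact Subtype.ext (p.smul_right c l k)
    · intro l l' s'; exact Subtype.ext (p.bracket_left l l' s')
    · intro l s s'; exact Subtype.ext (p.bracket_right l s s')
    · intro l s l' s'; exact Subtype.ext (p.bracket_bracket l s l' s')
  -- `T` is generated by the image of `h`
  have hgen : ∀ x : T, x ∈ S := by
    obtain ⟨ζ₁, hζ₁, _⟩ :=
      univ (ULift.{max u v} S) _ (pS.comp (uliftUpLieHom (R := F)))
    obtain ⟨ζ₂, _, huniq⟩ :=
      univ (ULift.{max u v} T) _ (p.comp (uliftUpLieHom (R := F)))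
    set φ : ULift.{max u v} S →ₗ⁅F⁆ ULift.{max u v} T :=
      ((uliftUpLieHom (R := F)).comp S.incl).comp (uliftDownLieHom (R := F)) with hφ
    have e1 : φ.comp ζ₁ = ζ₂ := huniq _ (by
      intro x y
      simp only [LieHom.comp_apply, hζ₁]
      rfl)
    have e2 : (uliftUpLieHom (R := F) : T →ₗ⁅F⁆ ULift.{max u v} T) = ζ₂ :=
      huniq _ (fun x y => rfl)
    intro x
    have : φ (ζ₁ x) = uliftUpLieHom (R := F) x := by
      rw [e2, ← e1]; rfl
    have hx : ((ζ₁ x).down : T) = x := congrArg ULift.down this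
    rw [← hx]
    exact (ζ₁ x).down.2
  -- every element of `T` commutes with `h l l`
  have central : ∀ (l : L) (y : T), ⁅y, h l l⁆ = 0 := by
    intro l
    let C : LieSubalgebra F T :=
      { carrier := {y : T | ⁅y, h l l⁆ = 0}
        add_mem' := by intro a b ha hb; simp only [Set.mem_setOf_eq] at *
                       rw [add_lie, ha, hb, add_zero]
        zero_mem' := by simp
        smul_mem' := by intro c a ha; simp only [Set.mem_setOf_eq] at *
                        rw [smul_lie, ha, smul_zero]
        lie_mem' := by intro a b ha hb; simp only [Set.mem_setOf_eq] at *
                       rw [lie_lie, ha, hb, lie_zero, lie_zero, sub_zero] }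
    have hSC : S ≤ C := by
      rw [hS, LieSubalgebra.lieSpan_le]
      rintro _ ⟨⟨a, b⟩, rfl⟩
      exact key a b l
    intro y
    exact hSC (hgen y)
  have hcen : ∀ l : L, h l l ∈ LieAlgebra.center F T := by
    intro l
    rw [LieAlgebra.center, LieModule.mem_maxTrivSubmodule]
    exact fun x => central l x
  have hspan : Submodule.span F {x : T | ∃ l : L, x = h l l} ≤
      (LieAlgebra.center F T : Submodule F T) := by
    rw [Submodule.span_le]
    rintro _ ⟨l, rfl⟩
    exact hcen l
  refine ⟨hspan, ⟨{ toSubmodule := Submodule.span F {x : T | ∃ l : L, x = h l l}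
                    lie_mem := ?_ }, rfl⟩⟩
  intro x m hm
  have hmc : m ∈ LieAlgebra.center F T := hspan hm
  rw [LieAlgebra.center, LieModule.mem_maxTrivSubmodule] at hmc
  simp only [hmc x]
  exact Submodule.zero_mem _
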